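/- The soundness translation respects the equivalence of sequent derivations: for all cut-free sequent derivations f, g of S ∣ Γ ⟶ C, if f ◦≐ g then sound f ≐ sound g in the categorical calculus. -/
import Mathlib


set_option linter.unusedVariables false
inductive Fma (V : Type) : Type
  | var : V → Fma V
  | unit : Fma V
  | tens : Fma V → Fma V → Fma V

abbrev Stp (V : Type) := Option (Fma V)

def stpF {V : Type} : Stp V → Fma V
  | none => Fma.unit
  | some A => A

def semF {V : Type} : Fma V → List (Fma V) → Fma V
  | A, [] => A
  | A, B :: Γ => semF (A.tens B) Γ

abbrev sem {V : Type} (S : Stp V) (Γ : List (Fma V)) : Fma V := semF (stpF S) Γ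

theorem semF_append {V : Type} (A : Fma V) (Γ Δ : List (Fma V)) :
    semF A (Γ ++ Δ) = semF (semF A Γ) Δ := by
  induction Γ generalizing A with
  | nil => rfl
  | cons B Γ ih => exact ih _

/-- The categorical calculus: derivations A ⟶ C of the free skew monoidal category. -/
inductive Der {V : Type} : Fma V → Fma V → Type
  | id : Der A A
  | comp : Der B C → Der A B → Der A C
  | tens : Der A C → Der B D → Der (Fma.tens A B) (Fma.tens C D)
  | lam : Der (Fma.tens Fma.unit A) A
  | rho : Der A (Fma.tens A Fma.unit)
  | alpha : Der (Fma.tens (Fma.tens A B) C) (Fma.tens A (Fma.tens B C))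

/-- The cut-free skew monoidal sequent calculus. -/
inductive CF {V : Type} : Stp V → List (Fma V) → Fma V → Type
  | ax : CF (some A) [] A
  | uf : CF (some A) Γ C → CF none (A :: Γ) C
  | Il : CF none Γ C → CF (some Fma.unit) Γ C
  | Ir : CF none [] Fma.unit
  | tl : CF (some A) (B :: Γ) C → CF (some (Fma.tens A B)) Γ C
  | tr : CF S Γ A → CF none Δ B → CF S (Γ ++ Δ) (Fma.tens A B)

def actDer {V : Type} {A B : Fma V} (f : Der A B) : (Γ : List (Fma V)) → Der (semF A Γ) (semF B Γ)
  | [] => f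
  | C :: Γ => actDer (f.tens Der.id) Γ

def psi {V : Type} (A B : Fma V) : (Γ : List (Fma V)) → Der (semF (Fma.tens A B) Γ) (Fma.tens A (semF B Γ))
  | [] => Der.id
  | C :: Γ => (psi A (Fma.tens B C) Γ).comp (actDer Der.alpha Γ)

def phiF {V : Type} (A : Fma V) : (Γ : List (Fma V)) → (Δ : List (Fma V)) →
    Der (semF A (Γ ++ Δ)) (Fma.tens (semF A Γ) (semF Fma.unit Δ))
  | [], Δ => (psi A Fma.unit Δ).comp (actDer Der.rho Δ)
  | C :: Γ, Δ => phiF (Fma.tens A C) Γ Δ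

def phi {V : Type} (S : Stp V) (Γ Δ : List (Fma V)) :
    Der (sem S (Γ ++ Δ)) (Fma.tens (sem S Γ) (sem none Δ)) := phiF (stpF S) Γ Δ

inductive DerEq {V : Type} : {A C : Fma V} → Der A C → Der A C → Prop
  | refl : DerEq f f
  | symm : DerEq f g → DerEq g f
  | trans : DerEq f g → DerEq g h → DerEq f h
  | compCong : DerEq g g' → DerEq f f' → DerEq (Der.comp g f) (Der.comp g' f')
  | tensCong : DerEq f f' → DerEq g g' → DerEq (Der.tens f g) (Der.tens f' g')
  | compIdL : DerEq (Der.comp Der.id f) f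
  | compIdR : DerEq (Der.comp f Der.id) f
  | compAssoc : DerEq (Der.comp h (Der.comp g f)) (Der.comp (Der.comp h g) f)
  | tensId : DerEq (Der.tens (Der.id (A := A)) (Der.id (A := B))) Der.id
  | tensComp : DerEq (Der.tens (Der.comp g f) (Der.comp k h))
      (Der.comp (Der.tens g k) (Der.tens f h))
  | natLam : DerEq (Der.comp f Der.lam) (Der.comp Der.lam (Der.tens Der.id f))
  | natRho : DerEq (Der.comp Der.rho f) (Der.comp (Der.tens f Der.id) Der.rho)
  | natAlpha : DerEq (Der.comp Der.alpha (Der.tens (Der.tens f g) h))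
      (Der.comp (Der.tens f (Der.tens g h)) Der.alpha)
  | lamRho : DerEq (Der.comp Der.lam Der.rho) (Der.id (A := Fma.unit))
  | skewB : DerEq (Der.comp (Der.tens Der.id Der.lam) (Der.comp Der.alpha (Der.tens Der.rho Der.id)))
      (Der.id (A := Fma.tens A B))
  | skewC : DerEq (Der.comp Der.lam Der.alpha) (Der.tens Der.lam (Der.id (A := B)))
  | skewD : DerEq (Der.comp Der.alpha Der.rho) (Der.tens (Der.id (A := A)) Der.rho)
  | skewE : DerEq
      (Der.comp (Der.tens Der.id Der.alpha) (Der.comp Der.alpha (Der.tens Der.alpha (Der.id (A := D)))))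
      (Der.comp Der.alpha Der.alpha)

inductive CFEq {V : Type} : {S : Stp V} → {Γ : List (Fma V)} → {C : Fma V} → CF S Γ C → CF S Γ C → Prop
  | refl : CFEq f f
  | symm : CFEq f g → CFEq g f
  | trans : CFEq f g → CFEq g h → CFEq f h
  | ufCong : CFEq f g → CFEq (CF.uf f) (CF.uf g)
  | IlCong : CFEq f g → CFEq (CF.Il f) (CF.Il g)
  | tlCong : CFEq f g → CFEq (CF.tl f) (CF.tl g)
  | trCong : CFEq f f' → CFEq g g' → CFEq (CF.tr f g) (CF.tr f' g')
  | axI : CFEq (CF.ax (A := Fma.unit (V := V))) (CF.Il CF.Ir)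
  | axTens : CFEq (CF.ax (A := Fma.tens A B)) (CF.tl (CF.tr CF.ax (CF.uf CF.ax)))
  | trUf : CFEq (CF.tr (CF.uf f) g) (CF.uf (CF.tr f g))
  | trIl : CFEq (CF.tr (CF.Il f) g) (CF.Il (CF.tr f g))
  | trTl : CFEq (CF.tr (CF.tl f) g) (CF.tl (CF.tr f g))

def soundCF {V : Type} {S : Stp V} {Γ : List (Fma V)} {C : Fma V} : CF S Γ C → Der (sem S Γ) C
  | .ax => .id
  | .uf f => (soundCF f).comp (actDer Der.lam _)
  | .Il f => soundCF (S := none) f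
  | .Ir => .id
  | .tl (A := A) (B := B) f => soundCF (S := some A) (Γ := B :: _) f
  | .tr f g => ((soundCF f).tens (soundCF g)).comp (phi _ _ _)


namespace SoundAux

open Fma Der

theorem actDer_cong {V : Type} {A B : Fma V} {f g : Der A B} (h : DerEq f g) :
    ∀ Γ, DerEq (actDer f Γ) (actDer g Γ)
  | [] => h
  | C :: Γ => actDer_cong (DerEq.tensCong h DerEq.refl) Γ

theorem actDer_comp {V : Type} {A B C : Fma V} (g : Der B C) (f : Der A B) :
    ∀ Γ, DerEq (actDer (g.comp f) Γ) ((actDer g Γ).comp (actDer f Γ))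
  | [] => DerEq.refl
  | D :: Γ =>
    DerEq.trans
      (actDer_cong (DerEq.trans
        (DerEq.tensCong DerEq.refl (DerEq.symm DerEq.compIdL))
        DerEq.tensComp) Γ)
      (actDer_comp (g.tens Der.id) (f.tens Der.id) Γ)

theorem actDer_id {V : Type} {A : Fma V} :
    ∀ Γ, DerEq (actDer (Der.id (A := A)) Γ) Der.id
  | [] => DerEq.refl
  | C :: Γ => DerEq.trans (actDer_cong DerEq.tensId Γ) (actDer_id Γ)

theorem psi_nat {V : Type} {A A' B B' : Fma V} (h : Der A A') (k : Der B B') :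
    ∀ Δ, DerEq ((psi A' B' Δ).comp (actDer (h.tens k) Δ))
          ((h.tens (actDer k Δ)).comp (psi A B Δ))
  | [] => DerEq.trans DerEq.compIdL (DerEq.symm DerEq.compIdR)
  | C :: Δ =>
    -- LHS = (psi A' (B'⊗C) Δ ∘ actDer alpha Δ) ∘ actDer ((h⊗k)⊗id) Δ
    DerEq.trans (DerEq.symm DerEq.compAssoc) <|
    DerEq.trans (DerEq.compCong DerEq.refl
      (DerEq.trans (DerEq.symm (actDer_comp _ _ Δ))
        (DerEq.trans (actDer_cong DerEq.natAlpha Δ) (actDer_comp _ _ Δ)))) <|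
    DerEq.trans DerEq.compAssoc <|
    DerEq.trans (DerEq.compCong (psi_nat h (k.tens Der.id) Δ) DerEq.refl) <|
    DerEq.symm DerEq.compAssoc

theorem phiF_nat {V : Type} {A A' : Fma V} (h : Der A A') :
    ∀ Γ Δ, DerEq ((phiF A' Γ Δ).comp (actDer h (Γ ++ Δ)))
          (((actDer h Γ).tens Der.id).comp (phiF A Γ Δ))
  | [], Δ =>
    DerEq.trans (DerEq.symm DerEq.compAssoc) <|
    DerEq.trans (DerEq.compCong DerEq.refl
      (DerEq.trans (DerEq.symm (actDer_comp _ _ Δ))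
        (DerEq.trans (actDer_cong DerEq.natRho Δ) (actDer_comp _ _ Δ)))) <|
    DerEq.trans DerEq.compAssoc <|
    DerEq.trans (DerEq.compCong
      (DerEq.trans (psi_nat h Der.id Δ)
        (DerEq.compCong (DerEq.tensCong DerEq.refl (actDer_id Δ)) DerEq.refl))
      DerEq.refl) <|
    DerEq.symm DerEq.compAssoc
  | C :: Γ, Δ => phiF_nat (h.tens Der.id) Γ Δ

end SoundAux

/-- The soundness translation respects the equivalences: `f ◦≐ g` implies
`sound f ≐ sound g`. -/

theorem statement7 (V : Type) (S : Stp V) (Γ : List (Fma V)) (C : Fma V)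
    (f g : CF S Γ C) (h : CFEq f g) : DerEq (soundCF f) (soundCF g) := by
  induction h with
  | refl => exact DerEq.refl
  | symm _ ih => exact DerEq.symm ih
  | trans _ _ ih1 ih2 => exact DerEq.trans ih1 ih2
  | ufCong _ ih => exact DerEq.compCong ih DerEq.refl
  | IlCong _ ih => exact ih
  | tlCong _ ih => exact ih
  | trCong _ _ ih1 ih2 => exact DerEq.compCong (DerEq.tensCong ih1 ih2) DerEq.refl
  | axI => exact DerEq.refl
  | axTens =>
      exact DerEq.symm <|
        DerEq.trans (DerEq.compCong (DerEq.tensCong DerEq.refl DerEq.compIdL)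
          (DerEq.compCong DerEq.compIdL DerEq.refl)) <|
        DerEq.trans DerEq.compAssoc <|
        DerEq.trans (DerEq.symm DerEq.compAssoc) DerEq.skewB
  | trUf =>
      rename_i A Γ' C' B Δ f g
      exact DerEq.symm <|
        DerEq.trans (DerEq.symm DerEq.compAssoc) <|
        DerEq.trans (DerEq.compCong DerEq.refl (SoundAux.phiF_nat Der.lam Γ' Δ)) <|
        DerEq.trans DerEq.compAssoc <|
        DerEq.compCong
          (DerEq.trans (DerEq.symm DerEq.tensComp)
            (DerEq.tensCong DerEq.refl DerEq.compIdR)) DerEq.refl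
  | trIl => exact DerEq.refl
  | trTl => exact DerEq.refl
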